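/- arXiv:2502.03920 — 3 statements merged into one kernel-verified Lean document; each statement's English description precedes it below -/
import Mathlib

section
/- Let (Ω, F, μ) be a probability space and d ∈ ℕ. Let (D_l)_{l∈ℕ} be a sequence of integrable random vectors D_l : Ω → ℝ^d and (a_l)_{l∈ℕ} a sequence in ℝ^d with the convention a_{-1} := 0, such that ∫_Ω D_l dμ = a_l − a_{l−1} for every l ∈ ℕ, a_l → a⋆ as l → ∞, and ∑_{l∈ℕ} ∫_Ω ‖D_l‖ dμ < ∞. Let P_L : ℕ → ℝ be a probability mass function with P_L(l) > 0 for all l. Then, on the product probability space ℕ × Ω where ℕ carries the discrete probability measure with mass P_L(l) at l and Ω carries μ, the function (l, ω) ↦ (1/P_L(l)) · D_l(ω) is integrable and its integral equals a⋆. In other words, randomizing the level l according to P_L and returning the increment estimator D_l / P_L(l) gives an unbiased estimator of the limit a⋆. -/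
open MeasureTheory Filter
open scoped ENNReal NNReal

/-- Single-term randomization (debiasing) scheme: drawing a level `l` from the positive
probability mass function `PL` and returning `D l / PL l`, where `D l` is an unbiased
estimator of the increment `a l - a (l-1)` (with `a_{-1} := 0`), yields an integrable
estimator on the product space whose expectation is the limit `astar` of the `a l`. -/
theorem unbiased_single_term_randomization
    {Ω : Type*} [MeasurableSpace Ω] (μ : Measure Ω) [IsProbabilityMeasure μ]
    (d : ℕ) (D : ℕ → Ω → EuclideanSpace ℝ (Fin d))
    (a : ℕ → EuclideanSpace ℝ (Fin d)) (astar : EuclideanSpace ℝ (Fin d))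
    (hint : ∀ l, Integrable (D l) μ)
    (hmean : ∀ l, (∫ ω, D l ω ∂μ) = a l - (if l = 0 then 0 else a (l - 1)))
    (hconv : Tendsto a atTop (nhds astar))
    (hsum : Summable fun l => ∫ ω, ‖D l ω‖ ∂μ)
    (PL : ℕ → ℝ) (hPLpos : ∀ l, 0 < PL l) (hPL : ∑' l, PL l = 1) :
    Integrable (fun x : ℕ × Ω => (PL x.1)⁻¹ • D x.1 x.2)
        ((Measure.sum fun l => ENNReal.ofReal (PL l) • Measure.dirac l).prod μ) ∧
      (∫ x : ℕ × Ω, (PL x.1)⁻¹ • D x.1 x.2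
          ∂((Measure.sum fun l => ENNReal.ofReal (PL l) • Measure.dirac l).prod μ)) = astar := by
  classical
  set f : ℕ × Ω → EuclideanSpace ℝ (Fin d) := fun x => (PL x.1)⁻¹ • D x.1 x.2 with hf
  -- rewrite the product measure as a sum of scaled pushforwards
  have hmeas : (Measure.sum fun l => ENNReal.ofReal (PL l) • Measure.dirac l).prod μ
      = Measure.sum (fun l => ENNReal.ofReal (PL l) • μ.map (Prod.mk l)) := by
    rw [Measure.prod_sum_left]
    congr 1
    funext l
    ext s hs
    rw [Measure.prod_apply hs, MeasureTheory.lintegral_smul_measure,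
      lintegral_dirac' _ (measurable_measure_prodMk_left hs), Measure.smul_apply,
      smul_eq_mul, Measure.map_apply measurable_prodMk_left hs, smul_eq_mul]
  have hemb : ∀ l : ℕ, MeasurableEmbedding (Prod.mk l : Ω → ℕ × Ω) :=
    fun l => measurableEmbedding_prodMk_left l
  -- integrability with respect to each piece
  have hIl : ∀ l, Integrable f (μ.map (Prod.mk l)) := by
    intro l
    rw [(hemb l).integrable_map_iff]
    exact ((hint l).smul ((PL l)⁻¹ : ℝ))
  have hIls : ∀ l, Integrable f (ENNReal.ofReal (PL l) • μ.map (Prod.mk l)) :=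
    fun l => (hIl l).smul_measure ENNReal.ofReal_ne_top
  -- finiteness of the total lintegral of the norm
  have hlin : ∀ l, (∫⁻ x, ‖f x‖₊ ∂(ENNReal.ofReal (PL l) • μ.map (Prod.mk l)))
      = ENNReal.ofReal (∫ ω, ‖D l ω‖ ∂μ) := by
    intro l
    rw [MeasureTheory.lintegral_smul_measure, smul_eq_mul, (hemb l).lintegral_map]
    have h1 : ∀ ω : Ω, ((‖f (l, ω)‖₊ : ℝ≥0) : ℝ≥0∞)
        = ENNReal.ofReal ((PL l)⁻¹) * (‖D l ω‖₊ : ℝ≥0∞) := by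
      intro ω
      simp only [hf, nnnorm_smul, ENNReal.coe_mul]
      congr 1
      exact Real.enorm_eq_ofReal (le_of_lt (inv_pos.mpr (hPLpos l)))
    simp_rw [h1]
    rw [MeasureTheory.lintegral_const_mul' _ _ ENNReal.ofReal_ne_top,
      ← (by have h := ofReal_integral_norm_eq_lintegral_enorm (hint l); exact h :
        ENNReal.ofReal (∫ ω, ‖D l ω‖ ∂μ) = ∫⁻ ω, (‖D l ω‖₊ : ℝ≥0∞) ∂μ), ← mul_assoc,
      ← ENNReal.ofReal_mul (le_of_lt (hPLpos l)),
      mul_inv_cancel₀ (ne_of_gt (hPLpos l)), ENNReal.ofReal_one, one_mul]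
  have hInt : Integrable f
      ((Measure.sum fun l => ENNReal.ofReal (PL l) • Measure.dirac l).prod μ) := by
    rw [hmeas]
    refine ⟨AEStronglyMeasurable.sum_measure fun l => (hIls l).aestronglyMeasurable, ?_⟩
    rw [HasFiniteIntegral, MeasureTheory.lintegral_sum_measure]
    simp_rw [enorm_eq_nnnorm, hlin]
    rw [← ENNReal.ofReal_tsum_of_nonneg (fun l => integral_nonneg (fun ω => norm_nonneg _)) hsum]
    exact ENNReal.ofReal_lt_top
  refine ⟨hInt, ?_⟩
  -- compute the integral
  have hieq : (∫ x, f x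
      ∂((Measure.sum fun l => ENNReal.ofReal (PL l) • Measure.dirac l).prod μ))
      = ∑' l, (a l - (if l = 0 then 0 else a (l - 1))) := by
    rw [hmeas] at hInt ⊢
    rw [MeasureTheory.integral_sum_measure hInt]
    congr 1
    funext l
    rw [MeasureTheory.integral_smul_measure, (hemb l).integral_map]
    have : (∫ ω, f (l, ω) ∂μ) = (PL l)⁻¹ • ∫ ω, D l ω ∂μ := by
      simp only [hf]
      rw [integral_smul]
    rw [this, hmean l, smul_smul, ENNReal.toReal_ofReal (le_of_lt (hPLpos l)),
      mul_inv_cancel₀ (ne_of_gt (hPLpos l)), one_smul]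
  rw [hieq]
  -- telescoping sum
  set g : ℕ → EuclideanSpace ℝ (Fin d) := fun l => a l - (if l = 0 then 0 else a (l - 1)) with hg
  have hgnorm : ∀ l, ‖g l‖ ≤ ∫ ω, ‖D l ω‖ ∂μ := by
    intro l
    simp only [hg]
    rw [← hmean l]
    exact norm_integral_le_integral_norm _
  have hgsummable : Summable g :=
    Summable.of_norm_bounded hsum hgnorm
  have hpartial : ∀ n : ℕ, (∑ l ∈ Finset.range (n + 1), g l) = a n := by
    intro n
    induction n with
    | zero => simp [hg]
    | succ k ih =>
      rw [Finset.sum_range_succ, ih, hg]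
      simp [Nat.succ_ne_zero]
  have htend : Tendsto (fun n => ∑ l ∈ Finset.range n, g l) atTop (nhds astar) := by
    have h1 : Tendsto (fun n : ℕ => a n) atTop (nhds astar) := hconv
    have h2 : Tendsto (fun n : ℕ => ∑ l ∈ Finset.range (n + 1), g l) atTop (nhds astar) := by
      simpa [hpartial] using h1
    exact (tendsto_add_atTop_iff_nat 1).mp h2
  have := hgsummable.hasSum.tendsto_sum_nat
  exact tendsto_nhds_unique this htend
end

section
/- Let (Ω, F, μ) be a probability space, d ∈ ℕ, and c : ℕ → ℕ → ℝ^d a doubly indexed family with the convention c_{−1,p} = c_{l,−1} = c_{−1,−1} = 0; define Δ_{l,p} := c_{l,p} − c_{l,p−1} − c_{l−1,p} + c_{l−1,p−1}. Let (D_{l,p})_{(l,p)∈ℕ²} be integrable random vectors D_{l,p} : Ω → ℝ^d with ∫_Ω D_{l,p} dμ = Δ_{l,p} for all (l,p), and let P_L, P_P : ℕ → ℝ be probability mass functions that are strictly positive everywhere. Assume: (i) ∑_{(l,p)∈ℕ²} ∫_Ω ‖D_{l,p}‖ dμ < ∞; (ii) for each l the limit β_l := lim_{p→∞} c_{l,p}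 exists; (iii) β_l → β⋆ as l → ∞. Then, on the product probability space ℕ × ℕ × Ω where the first factor carries the discrete measure with masses P_L(l), the second carries the discrete measure with masses P_P(p), and the third carries μ, the function (l, p, ω) ↦ (1/(P_L(l) P_P(p))) · D_{l,p}(ω) is integrable and its integral equals β⋆. -/
open MeasureTheory Filter ENNReal

section aux

variable {α E : Type*} [MeasurableSpace α] [NormedAddCommGroup E] [NormedSpace ℝ E]

lemma my_smul_prod {β : Type*} [MeasurableSpace β] (c : ℝ≥0∞) (μ : Measure α)
    (ν : Measure β) [SFinite ν] : (c • μ).prod ν = c • μ.prod ν := by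
  ext s hs
  simp [Measure.prod_apply hs, lintegral_smul_measure]

lemma my_sum_smul_dirac_prod (w : ℕ → ℝ≥0∞) (ν : Measure α) [SFinite ν] :
    (Measure.sum fun n => w n • Measure.dirac n).prod ν
      = Measure.sum fun n => w n • Measure.map (Prod.mk n) ν := by
  rw [Measure.prod_sum_left]
  congr 1
  funext n
  rw [my_smul_prod, Measure.dirac_prod]

lemma my_lemA (ν : Measure α) [SFinite ν] (w : ℕ → ℝ) (hw : ∀ n, 0 ≤ w n)
    (g : ℕ → α → E) (hg : ∀ n, Integrable (g n) ν)
    (hs : Summable fun n => w n * ∫ a, ‖g n a‖ ∂ν) :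
    Integrable (fun x : ℕ × α => g x.1 x.2)
        ((Measure.sum fun n => ENNReal.ofReal (w n) • Measure.dirac n).prod ν) ∧
      (∫ x : ℕ × α, g x.1 x.2
          ∂((Measure.sum fun n => ENNReal.ofReal (w n) • Measure.dirac n).prod ν))
        = ∑' n, w n • ∫ a, g n a ∂ν := by
  rw [my_sum_smul_dirac_prod]
  set f : ℕ × α → E := fun x => g x.1 x.2 with hf
  have hmap : ∀ n, AEStronglyMeasurable f (Measure.map (Prod.mk n) ν) := fun n => by
    rw [(measurableEmbedding_prodMk_left n).aestronglyMeasurable_map_iff]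
    exact (hg n).1
  have hac : ∀ n, (ENNReal.ofReal (w n) • Measure.map (Prod.mk n) ν)
      ≪ Measure.map (Prod.mk n) ν := fun n s hsn => by
    simp [hsn]
  have hmeas : AEStronglyMeasurable f
      (Measure.sum fun n => ENNReal.ofReal (w n) • Measure.map (Prod.mk n) ν) := by
    rw [aestronglyMeasurable_sum_measure_iff]
    exact fun n => (hmap n).mono_ac (hac n)
  have hlin : ∀ n, ∫⁻ x, ‖f x‖₊ ∂(Measure.map (Prod.mk n) ν)
      = ENNReal.ofReal (∫ a, ‖g n a‖ ∂ν) := by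
    intro n
    rw [(measurableEmbedding_prodMk_left n).lintegral_map,
      ofReal_integral_norm_eq_lintegral_enorm (hg n)]
    rfl
  have hInt : Integrable f
      (Measure.sum fun n => ENNReal.ofReal (w n) • Measure.map (Prod.mk n) ν) := by
    refine ⟨hmeas, ?_⟩
    show (∫⁻ x, ‖f x‖₊ ∂(Measure.sum fun n =>
      ENNReal.ofReal (w n) • Measure.map (Prod.mk n) ν)) < ⊤
    rw [lintegral_sum_measure]
    have : ∀ n, ∫⁻ x, ‖f x‖₊ ∂(ENNReal.ofReal (w n) • Measure.map (Prod.mk n) ν)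
        = ENNReal.ofReal (w n * ∫ a, ‖g n a‖ ∂ν) := by
      intro n
      rw [lintegral_smul_measure, hlin n, smul_eq_mul, ENNReal.ofReal_mul (hw n)]
    rw [tsum_congr this, ← ENNReal.ofReal_tsum_of_nonneg
      (fun n => mul_nonneg (hw n) (integral_nonneg fun a => norm_nonneg _)) hs]
    exact ENNReal.ofReal_lt_top
  refine ⟨hInt, ?_⟩
  rw [integral_sum_measure hInt]
  refine tsum_congr fun n => ?_
  rw [integral_smul_measure, (measurableEmbedding_prodMk_left n).integral_map,
    ENNReal.toReal_ofReal (hw n)]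

omit [NormedSpace ℝ E] in
lemma my_tsum_telescope {f g : ℕ → E}
    (hg : ∀ p, g p = f p - (if p = 0 then 0 else f (p - 1)))
    (hsum : Summable g) {L : E} (hf : Tendsto f atTop (nhds L)) :
    ∑' p, g p = L := by
  have hr : ∀ n, ∑ p ∈ Finset.range (n + 1), g p = f n := by
    intro n
    induction n with
    | zero => simp [hg]
    | succ k ih =>
        rw [Finset.sum_range_succ, ih, hg (k + 1)]
        simp
  have h1 : Tendsto (fun n => ∑ p ∈ Finset.range (n + 1), g p) atTop (nhds (∑' p, g p)) :=
    hsum.hasSum.tendsto_sum_nat.comp (tendsto_add_atTop_nat 1)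
  rw [funext hr] at h1
  exact tendsto_nhds_unique h1 hf

end aux

/-- Double randomization scheme (UMSA): drawing a level `l ∼ PL` and an index `p ∼ PP`
independently, and returning `D l p / (PL l * PP p)`, where `D l p` is an unbiased
estimator of the double increment `Δ (l,p)` of the doubly indexed family `c`, gives an
integrable estimator on the product space `ℕ × ℕ × Ω` whose expectation equals the
iterated limit `βstar` of `c`. -/
theorem unbiased_double_randomization
    {Ω : Type*} [MeasurableSpace Ω] (μ : Measure Ω) [IsProbabilityMeasure μ]
    (d : ℕ) (c : ℕ → ℕ → EuclideanSpace ℝ (Fin d)) (Δ : ℕ × ℕ → EuclideanSpace ℝ (Fin d))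
    (hΔ : ∀ l p, Δ (l, p) =
      c l p - (if p = 0 then 0 else c l (p - 1)) - (if l = 0 then 0 else c (l - 1) p)
        + (if l = 0 ∨ p = 0 then 0 else c (l - 1) (p - 1)))
    (D : ℕ → ℕ → Ω → EuclideanSpace ℝ (Fin d))
    (hint : ∀ l p, Integrable (D l p) μ)
    (hmean : ∀ l p, (∫ ω, D l p ω ∂μ) = Δ (l, p))
    (PL PP : ℕ → ℝ) (hPLpos : ∀ l, 0 < PL l) (hPPpos : ∀ p, 0 < PP p)
    (hPL : ∑' l, PL l = 1) (hPP : ∑' p, PP p = 1)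
    (habs : Summable fun lp : ℕ × ℕ => ∫ ω, ‖D lp.1 lp.2 ω‖ ∂μ)
    (β : ℕ → EuclideanSpace ℝ (Fin d))
    (hβ : ∀ l, Tendsto (fun p => c l p) atTop (nhds (β l)))
    (βstar : EuclideanSpace ℝ (Fin d)) (hβstar : Tendsto β atTop (nhds βstar)) :
    Integrable (fun x : ℕ × ℕ × Ω => (PL x.1 * PP x.2.1)⁻¹ • D x.1 x.2.1 x.2.2)
        ((Measure.sum fun l => ENNReal.ofReal (PL l) • Measure.dirac l).prod
          ((Measure.sum fun p => ENNReal.ofReal (PP p) • Measure.dirac p).prod μ)) ∧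
      (∫ x : ℕ × ℕ × Ω, (PL x.1 * PP x.2.1)⁻¹ • D x.1 x.2.1 x.2.2
          ∂((Measure.sum fun l => ENNReal.ofReal (PL l) • Measure.dirac l).prod
            ((Measure.sum fun p => ENNReal.ofReal (PP p) • Measure.dirac p).prod μ))) = βstar := by
  classical
  have hPLne : ∀ l, PL l ≠ 0 := fun l => (hPLpos l).ne'
  have hPPne : ∀ p, PP p ≠ 0 := fun p => (hPPpos p).ne'
  -- summability of Δ
  have hΔsum : Summable fun lp : ℕ × ℕ => Δ lp := by
    refine Summable.of_norm_bounded habs fun lp => ?_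
    calc ‖Δ lp‖ = ‖∫ ω, D lp.1 lp.2 ω ∂μ‖ := by rw [hmean lp.1 lp.2]
      _ ≤ ∫ ω, ‖D lp.1 lp.2 ω‖ ∂μ := norm_integral_le_integral_norm _
  -- the inner measure on ℕ × Ω
  haveI hfinP : ∀ p : ℕ, IsFiniteMeasure (ENNReal.ofReal (PP p) • Measure.dirac p) := by
    intro p
    constructor
    simp [ENNReal.ofReal_lt_top]
  haveI hfinL : ∀ l : ℕ, IsFiniteMeasure (ENNReal.ofReal (PL l) • Measure.dirac l) := by
    intro l
    constructor
    simp [ENNReal.ofReal_lt_top]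
  set νP : Measure ℕ := Measure.sum fun p => ENNReal.ofReal (PP p) • Measure.dirac p with hνPdef
  set ρ : Measure (ℕ × Ω) := νP.prod μ with hρdef
  -- pointwise integrand facts
  have hgInt : ∀ l p, Integrable (fun ω => (PL l * PP p)⁻¹ • D l p ω) μ :=
    fun l p => (hint l p).smul (PL l * PP p)⁻¹
  have hgnorm : ∀ l p, (∫ ω, ‖(PL l * PP p)⁻¹ • D l p ω‖ ∂μ)
      = (PL l * PP p)⁻¹ * ∫ ω, ‖D l p ω‖ ∂μ := by
    intro l p
    have h1 : ∀ ω : Ω, ‖(PL l * PP p)⁻¹ • D l p ω‖ = (PL l * PP p)⁻¹ * ‖D l p ω‖ := by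
      intro ω
      rw [norm_smul, Real.norm_eq_abs,
        abs_of_nonneg (inv_nonneg.2 (mul_pos (hPLpos l) (hPPpos p)).le)]
    simp only [h1]
    exact integral_const_mul _ _
  have hsl : ∀ l, Summable fun p => PP p * ∫ ω, ‖(PL l * PP p)⁻¹ • D l p ω‖ ∂μ := by
    intro l
    refine ((habs.prod_factor l).mul_left ((PL l)⁻¹)).congr fun p => ?_
    rw [hgnorm l p]
    have h1 := hPLne l
    have h2 := hPPne p
    field_simp
  -- inner application: integral over ρ
  have inner : ∀ l,
      Integrable (fun y : ℕ × Ω => (PL l * PP y.1)⁻¹ • D l y.1 y.2) ρ ∧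
      (∫ y : ℕ × Ω, (PL l * PP y.1)⁻¹ • D l y.1 y.2 ∂ρ)
        = (PL l)⁻¹ • ∑' p, Δ (l, p) := by
    intro l
    obtain ⟨hI, hE⟩ := my_lemA μ PP (fun p => (hPPpos p).le)
      (fun p ω => (PL l * PP p)⁻¹ • D l p ω) (fun p => hgInt l p) (hsl l)
    refine ⟨hI, ?_⟩
    rw [hE]
    have : ∀ p, PP p • ∫ ω, (PL l * PP p)⁻¹ • D l p ω ∂μ = (PL l)⁻¹ • Δ (l, p) := by
      intro p
      rw [integral_smul, hmean l p, smul_smul]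
      congr 1
      have h1 := hPLne l
      have h2 := hPPne p
      field_simp
    rw [tsum_congr this, tsum_const_smul'']
  -- inner application: norm integral over ρ
  have innerNorm : ∀ l, (∫ y : ℕ × Ω, ‖(PL l * PP y.1)⁻¹ • D l y.1 y.2‖ ∂ρ)
      = (PL l)⁻¹ * ∑' p, ∫ ω, ‖D l p ω‖ ∂μ := by
    intro l
    obtain ⟨hI, hE⟩ := my_lemA μ PP (fun p => (hPPpos p).le)
      (fun p ω => ‖(PL l * PP p)⁻¹ • D l p ω‖)
      (fun p => (hgInt l p).norm) (by simpa only [norm_norm] using hsl l)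
    rw [hE]
    have : ∀ p, PP p • ∫ ω, ‖(PL l * PP p)⁻¹ • D l p ω‖ ∂μ
        = (PL l)⁻¹ * ∫ ω, ‖D l p ω‖ ∂μ := by
      intro p
      rw [smul_eq_mul, hgnorm l p]
      have h1 := hPLne l
      have h2 := hPPne p
      field_simp
    rw [tsum_congr this, tsum_mul_left]
  -- outer application
  have hsL : Summable fun l => PL l * ∫ y : ℕ × Ω, ‖(PL l * PP y.1)⁻¹ • D l y.1 y.2‖ ∂ρ := by
    refine habs.prod.congr fun l => ?_
    rw [innerNorm l, ← mul_assoc, mul_inv_cancel₀ (hPLne l), one_mul]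
  obtain ⟨hI, hE⟩ := my_lemA ρ PL (fun l => (hPLpos l).le)
    (fun l y => (PL l * PP y.1)⁻¹ • D l y.1 y.2) (fun l => (inner l).1) hsL
  refine ⟨hI, ?_⟩
  rw [hE]
  have hterm : ∀ l, PL l • ∫ y : ℕ × Ω, (PL l * PP y.1)⁻¹ • D l y.1 y.2 ∂ρ
      = ∑' p, Δ (l, p) := by
    intro l
    rw [(inner l).2, smul_smul, mul_inv_cancel₀ (hPLne l), one_smul]
  rw [tsum_congr hterm]
  -- telescoping
  have hsection : ∀ l, Summable fun p => Δ (l, p) := fun l => hΔsum.prod_factor l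
  have hβl : ∀ l, ∑' p, Δ (l, p) = β l - (if l = 0 then 0 else β (l - 1)) := by
    intro l
    refine my_tsum_telescope (f := fun p => c l p - (if l = 0 then 0 else c (l - 1) p))
      ?_ (hsection l) ?_
    · intro p
      rw [hΔ l p]
      by_cases hp : p = 0
      · subst hp
        by_cases hl : l = 0 <;> simp [hl] <;> abel
      · by_cases hl : l = 0 <;> simp [hp, hl] <;> abel
    · by_cases hl : l = 0
      · subst hl
        simpa using hβ 0
      · simp only [hl, if_neg, not_false_iff]
        exact (hβ l).sub (hβ (l - 1))
  rw [tsum_congr hβl]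
  exact my_tsum_telescope (fun l => rfl) ((hΔsum.prod).congr hβl) hβstar
end

section
/- Let d ∈ ℕ and let λ denote Lebesgue measure on ℝ^d. Let γ, γ' : ℝ^d → (0, ∞) be measurable, and let q, q' : ℝ^d × ℝ^d → (0, ∞) be measurable with ∫ q(u, w) λ(dw) = 1 and ∫ q'(u, w) λ(dw) = 1 for every u ∈ ℝ^d. Define the Metropolis–Hastings acceptance probabilities α(u, w) := min{1, γ(w) q(w, u) / (γ(u) q(u, w))} and α'(u, w) := min{1, γ'(w) q'(w, u) / (γ'(u) q'(u, w))}, and the Metropolis–Hastings kernels K(u, A) := ∫_A α(u, w) q(u, w) λ(dw) + 1_A(u) (1 − ∫_{ℝ^d} α(u, w) q(u, w) λ(dw)), with K' defined analogously from α', q'. Fix (u, u') ∈ ℝ^d × ℝ^d and let ν̌ be any probability measure on ℝ^d × ℝ^d whose first marginal has density w ↦ q(u, w) and whose second marginal has density w' ↦ q'(u', w') with respect to λ. Let ϒ be the uniform probability measure on [0,1] and define T : ℝ^d × ℝ^d × [0,1] → ℝ^d × ℝ^d by T(w, w', v) := ( if v < α(u, w) then w else u , if v < α'(u', w') then w' else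 u' ). Then the pushforward of ν̌ ⊗ ϒ under T has first marginal exactly K(u, ·) and second marginal exactly K'(u', ·). -/
open MeasureTheory ENNReal

/-- Metropolis–Hastings acceptance probability for unnormalized target density `γ`
and proposal density `q`. -/
noncomputable def mhAccept {d : ℕ} (γ : (Fin d → ℝ) → ℝ)
    (q : (Fin d → ℝ) → (Fin d → ℝ) → ℝ) (u w : Fin d → ℝ) : ℝ :=
  min 1 (γ w * q w u / (γ u * q u w))

/-- The Metropolis–Hastings kernel (as a measure, for a fixed starting point `u`):
accept a proposed move `w ∼ q(u, ·)` with probability `mhAccept γ q u w`, otherwise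
stay at `u`. -/
noncomputable def mhKernel {d : ℕ} (γ : (Fin d → ℝ) → ℝ)
    (q : (Fin d → ℝ) → (Fin d → ℝ) → ℝ) (u : Fin d → ℝ) : Measure (Fin d → ℝ) :=
  volume.withDensity (fun w => ENNReal.ofReal (mhAccept γ q u w * q u w)) +
    (ENNReal.ofReal (1 - ∫ w, mhAccept γ q u w * q u w)) • Measure.dirac u

section Aux

variable {d : ℕ}

lemma mhAccept_measurable (γ : (Fin d → ℝ) → ℝ) (hγm : Measurable γ)
    (q : (Fin d → ℝ) → (Fin d → ℝ) → ℝ) (hqm : Measurable (Function.uncurry q))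
    (u : Fin d → ℝ) : Measurable (mhAccept γ q u) := by
  have h1 : Measurable fun w => q w u :=
    hqm.comp (measurable_id.prodMk measurable_const)
  have h2 : Measurable fun w => q u w :=
    hqm.comp (measurable_const.prodMk measurable_id)
  exact measurable_const.min ((hγm.mul h1).div (measurable_const.mul h2))

lemma mhAccept_pos (γ : (Fin d → ℝ) → ℝ) (hγpos : ∀ w, 0 < γ w)
    (q : (Fin d → ℝ) → (Fin d → ℝ) → ℝ) (hqpos : ∀ u w, 0 < q u w)
    (u w : Fin d → ℝ) : 0 < mhAccept γ q u w :=
  lt_min one_pos (div_pos (mul_pos (hγpos w) (hqpos w u)) (mul_pos (hγpos u) (hqpos u w)))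

lemma mhAccept_le_one (γ : (Fin d → ℝ) → ℝ)
    (q : (Fin d → ℝ) → (Fin d → ℝ) → ℝ) (u w : Fin d → ℝ) :
    mhAccept γ q u w ≤ 1 := min_le_left _ _

lemma mh_marginal_aux (γ : (Fin d → ℝ) → ℝ) (hγm : Measurable γ)
    (hγpos : ∀ w, 0 < γ w)
    (q : (Fin d → ℝ) → (Fin d → ℝ) → ℝ) (hqm : Measurable (Function.uncurry q))
    (hqpos : ∀ u w, 0 < q u w) (hqint : ∀ u, ∫ w, q u w = 1)
    (u : Fin d → ℝ) :
    ((volume.withDensity fun w => ENNReal.ofReal (q u w)).prod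
        (volume.restrict (Set.Icc (0:ℝ) 1))).map
      (fun p : (Fin d → ℝ) × ℝ => if p.2 < mhAccept γ q u p.1 then p.1 else u)
      = mhKernel γ q u := by
  set α : (Fin d → ℝ) → ℝ := mhAccept γ q u with hα_def
  have mα : Measurable α := mhAccept_measurable γ hγm q hqm u
  have hα0 : ∀ w, 0 < α w := fun w => mhAccept_pos γ hγpos q hqpos u w
  have hα1 : ∀ w, α w ≤ 1 := fun w => mhAccept_le_one γ q u w
  have hquw : Measurable fun w => q u w :=
    hqm.comp (measurable_const.prodMk measurable_id)
  set g : (Fin d → ℝ) × ℝ → (Fin d → ℝ) :=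
    fun p => if p.2 < α p.1 then p.1 else u with hg_def
  have hsg : MeasurableSet {p : (Fin d → ℝ) × ℝ | p.2 < α p.1} :=
    measurableSet_lt measurable_snd (mα.comp measurable_fst)
  have hg : Measurable g := Measurable.ite hsg measurable_fst measurable_const
  -- integrability facts
  have hq_int : Integrable (fun w => q u w) := integrable_of_integral_eq_one (hqint u)
  have hαq_int : Integrable (fun w => α w * q u w) := by
    refine hq_int.mono' (mα.mul hquw).aestronglyMeasurable (ae_of_all _ fun w => ?_)
    rw [Real.norm_eq_abs, abs_of_nonneg (mul_nonneg (hα0 w).le (hqpos u w).le)]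
    exact mul_le_of_le_one_left (hqpos u w).le (hα1 w)
  refine Measure.ext fun A hA => ?_
  rw [Measure.map_apply hg hA, Measure.prod_apply (hg hA)]
  have hslice : ∀ w, (volume.restrict (Set.Icc (0:ℝ) 1)) (Prod.mk w ⁻¹' (g ⁻¹' A)) =
      Set.indicator A (fun w => ENNReal.ofReal (α w)) w +
        Set.indicator A (fun _ => (1 : ℝ≥0∞)) u * ENNReal.ofReal (1 - α w) := by
    intro w
    by_cases hw : w ∈ A <;> by_cases hu : u ∈ A
    · have hset : Prod.mk w ⁻¹' (g ⁻¹' A) = Set.univ := by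
        ext v
        simp only [hg_def, Set.mem_preimage, Set.mem_univ, iff_true]
        split_ifs <;> assumption
      rw [hset, Measure.restrict_apply_univ, Real.volume_Icc,
        Set.indicator_of_mem hw, Set.indicator_of_mem hu, one_mul,
        ← ENNReal.ofReal_add (hα0 w).le (by linarith [hα1 w])]
      norm_num
    · have hset : Prod.mk w ⁻¹' (g ⁻¹' A) = Set.Iio (α w) := by
        ext v
        simp only [hg_def, Set.mem_preimage, Set.mem_Iio]
        split_ifs with h <;> simp [h, hw, hu]
      have hcap : Set.Iio (α w) ∩ Set.Icc (0:ℝ) 1 = Set.Ico 0 (α w) := by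
        ext v
        simp only [Set.mem_inter_iff, Set.mem_Iio, Set.mem_Icc, Set.mem_Ico]
        constructor
        · rintro ⟨h1, h2, h3⟩; exact ⟨h2, h1⟩
        · rintro ⟨h1, h2⟩; exact ⟨h2, h1, by linarith [hα1 w]⟩
      rw [hset, Measure.restrict_apply measurableSet_Iio, hcap, Real.volume_Ico,
        Set.indicator_of_mem hw, Set.indicator_of_notMem hu]
      simp
    · have hset : Prod.mk w ⁻¹' (g ⁻¹' A) = Set.Ici (α w) := by
        ext v
        simp only [hg_def, Set.mem_preimage, Set.mem_Ici]
        split_ifs with h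
        · exact iff_of_false hw (not_le.mpr h)
        · exact iff_of_true hu (not_lt.mp h)
      have hcap : Set.Ici (α w) ∩ Set.Icc (0:ℝ) 1 = Set.Icc (α w) 1 := by
        ext v
        simp only [Set.mem_inter_iff, Set.mem_Ici, Set.mem_Icc]
        constructor
        · rintro ⟨h1, h2, h3⟩; exact ⟨h1, h3⟩
        · rintro ⟨h1, h2⟩; exact ⟨h1, by linarith [hα0 w], h2⟩
      rw [hset, Measure.restrict_apply measurableSet_Ici, hcap, Real.volume_Icc,
        Set.indicator_of_notMem hw, Set.indicator_of_mem hu]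
      simp
    · have hset : Prod.mk w ⁻¹' (g ⁻¹' A) = ∅ := by
        ext v
        simp only [hg_def, Set.mem_preimage, Set.mem_empty_iff_false, iff_false]
        split_ifs <;> assumption
      rw [hset, measure_empty, Set.indicator_of_notMem hw, Set.indicator_of_notMem hu]
      simp
  rw [lintegral_congr hslice]
  have hm1 : Measurable fun w => Set.indicator A (fun w => ENNReal.ofReal (α w)) w :=
    (mα.ennreal_ofReal).indicator hA
  rw [lintegral_add_left hm1, lintegral_indicator hA _,
    lintegral_const_mul (f := fun w => ENNReal.ofReal (1 - α w)) _
      (measurable_const.sub mα).ennreal_ofReal]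
  have hterm1 : ∫⁻ w in A, ENNReal.ofReal (α w)
        ∂(volume.withDensity fun w => ENNReal.ofReal (q u w)) =
      ∫⁻ w in A, ENNReal.ofReal (α w * q u w) := by
    rw [restrict_withDensity hA,
      lintegral_withDensity_eq_lintegral_mul _ (hquw.ennreal_ofReal)
        (mα.ennreal_ofReal)]
    refine lintegral_congr fun w => ?_
    simp only [Pi.mul_apply]
    rw [← ENNReal.ofReal_mul (hqpos u w).le, mul_comm]
  have hterm2 : ∫⁻ w, ENNReal.ofReal (1 - α w)
        ∂(volume.withDensity fun w => ENNReal.ofReal (q u w)) =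
      ENNReal.ofReal (1 - ∫ w, α w * q u w) := by
    rw [lintegral_withDensity_eq_lintegral_mul _ (hquw.ennreal_ofReal)
      (g := fun w => ENNReal.ofReal (1 - α w)) ((measurable_const.sub mα).ennreal_ofReal)]
    have heq : ∀ w, ((fun w => ENNReal.ofReal (q u w)) *
        fun w => ENNReal.ofReal (1 - α w)) w =
        ENNReal.ofReal ((1 - α w) * q u w) := by
      intro w
      simp only [Pi.mul_apply]
      rw [← ENNReal.ofReal_mul (hqpos u w).le, mul_comm]
    rw [lintegral_congr heq]
    have hint : Integrable (fun w => (1 - α w) * q u w) := by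
      have : (fun w => (1 - α w) * q u w) = fun w => q u w - α w * q u w := by
        funext w; ring
      rw [this]; exact hq_int.sub hαq_int
    rw [← ofReal_integral_eq_lintegral_ofReal hint
      (ae_of_all _ fun w => mul_nonneg (by linarith [hα1 w]) (hqpos u w).le)]
    congr 1
    have : (fun w => (1 - α w) * q u w) = fun w => q u w - α w * q u w := by
      funext w; ring
    rw [this, integral_sub hq_int hαq_int, hqint u]
  rw [hterm1, hterm2]
  simp only [mhKernel, Measure.add_apply, Measure.smul_apply, smul_eq_mul,
    withDensity_apply _ hA, Measure.dirac_apply' u hA, ← hα_def]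
  rw [mul_comm]
  rfl

end Aux

/-- Coupled Metropolis–Hastings: given any coupling `ν` of the two proposal
distributions `q(u, ·)` and `q'(u', ·)` and a single shared uniform random variable
on `[0,1]` used for the two accept/reject decisions, the resulting pair of states is a
coupling of the two Metropolis–Hastings kernels `K(u, ·)` and `K'(u', ·)`. -/
theorem coupled_metropolis_hastings_marginals {d : ℕ}
    (γ γ' : (Fin d → ℝ) → ℝ) (hγm : Measurable γ) (hγ'm : Measurable γ')
    (hγpos : ∀ w, 0 < γ w) (hγ'pos : ∀ w, 0 < γ' w)
    (q q' : (Fin d → ℝ) → (Fin d → ℝ) → ℝ)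
    (hqm : Measurable (Function.uncurry q)) (hq'm : Measurable (Function.uncurry q'))
    (hqpos : ∀ u w, 0 < q u w) (hq'pos : ∀ u w, 0 < q' u w)
    (hqint : ∀ u, ∫ w, q u w = 1) (hq'int : ∀ u, ∫ w, q' u w = 1)
    (u u' : Fin d → ℝ)
    (ν : Measure ((Fin d → ℝ) × (Fin d → ℝ))) [IsProbabilityMeasure ν]
    (hν1 : ν.map Prod.fst = volume.withDensity fun w => ENNReal.ofReal (q u w))
    (hν2 : ν.map Prod.snd = volume.withDensity fun w => ENNReal.ofReal (q' u' w))
    (T : ((Fin d → ℝ) × (Fin d → ℝ)) × ℝ → (Fin d → ℝ) × (Fin d → ℝ))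
    (hT : ∀ w w' v, T ((w, w'), v) =
      ((if v < mhAccept γ q u w then w else u),
       (if v < mhAccept γ' q' u' w' then w' else u'))) :
    ((ν.prod (volume.restrict (Set.Icc (0:ℝ) 1))).map T).map Prod.fst = mhKernel γ q u ∧
      ((ν.prod (volume.restrict (Set.Icc (0:ℝ) 1))).map T).map Prod.snd
        = mhKernel γ' q' u' := by
  have hTeq : T = fun p => ((if p.2 < mhAccept γ q u p.1.1 then p.1.1 else u),
      (if p.2 < mhAccept γ' q' u' p.1.2 then p.1.2 else u')) := by
    funext p
    obtain ⟨⟨w, w'⟩, v⟩ := p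
    exact hT w w' v
  have mα : Measurable (mhAccept γ q u) := mhAccept_measurable γ hγm q hqm u
  have mα' : Measurable (mhAccept γ' q' u') := mhAccept_measurable γ' hγ'm q' hq'm u'
  set g : (Fin d → ℝ) × ℝ → (Fin d → ℝ) :=
    fun p => if p.2 < mhAccept γ q u p.1 then p.1 else u with hg_def
  set g' : (Fin d → ℝ) × ℝ → (Fin d → ℝ) :=
    fun p => if p.2 < mhAccept γ' q' u' p.1 then p.1 else u' with hg'_def
  have hg : Measurable g :=
    Measurable.ite (measurableSet_lt measurable_snd (mα.comp measurable_fst))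
      measurable_fst measurable_const
  have hg' : Measurable g' :=
    Measurable.ite (measurableSet_lt measurable_snd (mα'.comp measurable_fst))
      measurable_fst measurable_const
  have hTm : Measurable T := by
    rw [hTeq]
    exact (hg.comp ((measurable_fst.comp measurable_fst).prodMk measurable_snd)).prodMk
      (hg'.comp ((measurable_snd.comp measurable_fst).prodMk measurable_snd))
  constructor
  · have hcomp : Prod.fst ∘ T = g ∘ (Prod.map Prod.fst id) := by
      rw [hTeq]; rfl
    rw [Measure.map_map measurable_fst hTm, hcomp,
      ← Measure.map_map hg (measurable_fst.prodMap measurable_id),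
      ← Measure.map_prod_map _ _ measurable_fst measurable_id, Measure.map_id, hν1]
    exact mh_marginal_aux γ hγm hγpos q hqm hqpos hqint u
  · have hcomp : Prod.snd ∘ T = g' ∘ (Prod.map Prod.snd id) := by
      rw [hTeq]; rfl
    rw [Measure.map_map measurable_snd hTm, hcomp,
      ← Measure.map_map hg' (measurable_snd.prodMap measurable_id),
      ← Measure.map_prod_map _ _ measurable_snd measurable_id, Measure.map_id, hν2]
    exact mh_marginal_aux γ' hγ'm hγ'pos q' hq'm hq'pos hq'int u'
end
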